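/- Let n ≥ 1, C₀ ≥ 1, k ≥ 2 and δ > 0. There exist ε₀ > 0 and C > 1, depending only on n, C₀, k and δ, with the following property. Let μ be a compactly supported Borel measure on ℝⁿ with μ(B) ≤ C₀·diam B for every closed ball B, and let F be the support of μ. Suppose x ∈ F, t > 0, 0 < ε < ε₀, μ(B(x,t)) ≥ δ·t, μ(B(y,t)) ≥ δ·t, and dist(x,y) ≤ (k/2)·t. If D₁ and D₂ are lines in ℝⁿ satisfying (1/t) ∫_{B(x,kt)} (dist(z,D₁)/t) dμ(z) ≤ 10⁴·ε and (1/t) ∫_{B(y,kt)} (dist(z,D₂)/t) dμ(z) ≤ 10⁴·ε, then: (i) for all w ∈ D₁, dist(w, D₂) ≤ C·ε·(t + dist(w,x)), and for all w ∈ D₂, dist(w, D₁) ≤ C·ε·(t + dist(w,x)); (ii) the angle between the directions of D₁ and D₂ is at most C·ε. -/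

import Mathlib

open MeasureTheory Metric Set
open scoped ENNReal NNReal

/-- Menger curvature of a triple of points: the reciprocal of the circumradius,
equal to `2 · dist(x, L_{y,z}) / (dist(x,y) · dist(x,z))`, with the convention that
it is `0` for collinear (in particular non pairwise distinct) triples. -/
noncomputable def mengerCurvature {E : Type*} [NormedAddCommGroup E] [InnerProductSpace ℝ E]
    (x y z : E) : ℝ :=
  letI := Classical.propDecidable
  if Collinear ℝ ({x, y, z} : Set E) then 0
  else 2 * Metric.infDist x (affineSpan ℝ ({y, z} : Set E) : Set E) / (dist x y * dist x z)

/-- The total Menger curvature `c²(A) = ∭_{A³} c(x,y,z)² dH¹dH¹dH¹`. -/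
noncomputable def totalMengerCurvSq {E : Type*} [NormedAddCommGroup E] [InnerProductSpace ℝ E]
    [MeasurableSpace E] [BorelSpace E] (A : Set E) : ℝ≥0∞ :=
  ∫⁻ x in A, ∫⁻ y in A, ∫⁻ z in A, ENNReal.ofReal (mengerCurvature x y z ^ 2)
    ∂(Measure.hausdorffMeasure 1) ∂(Measure.hausdorffMeasure 1) ∂(Measure.hausdorffMeasure 1)


/-- A line of `E`: a nonempty affine subspace whose direction has dimension `1`. -/
def IsLine {E : Type*} [NormedAddCommGroup E] [InnerProductSpace ℝ E]
    (D : AffineSubspace ℝ E) : Prop :=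
  (D : Set E).Nonempty ∧ Module.finrank ℝ D.direction = 1

/-- The (topological) support of a measure: points all of whose closed balls of positive
radius have positive measure. -/
def measSupport {E : Type*} [NormedAddCommGroup E] [InnerProductSpace ℝ E]
    [MeasurableSpace E] (μ : Measure E) : Set E :=
  {x | ∀ r : ℝ, 0 < r → 0 < μ (Metric.closedBall x r)}

/- ### Auxiliary lemmas -/

lemma aux_line_direction_eq_span {E : Type*} [NormedAddCommGroup E] [InnerProductSpace ℝ E]
    [FiniteDimensional ℝ E] {D : AffineSubspace ℝ E} (hD : Module.finrank ℝ D.direction = 1)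
    {p₁ p₂ : E} (h1 : p₁ ∈ D) (h2 : p₂ ∈ D) (hne : p₂ - p₁ ≠ 0) :
    D.direction = Submodule.span ℝ {p₂ - p₁} := by
  have hv : p₂ - p₁ ∈ D.direction := by
    simpa [vsub_eq_sub] using AffineSubspace.vsub_mem_direction h2 h1
  have hle : Submodule.span ℝ {p₂ - p₁} ≤ D.direction := by
    rw [Submodule.span_le]; simpa using hv
  exact (Submodule.eq_of_le_of_finrank_le hle
    (by rw [hD, finrank_span_singleton hne])).symm

lemma aux_line_param {E : Type*} [NormedAddCommGroup E] [InnerProductSpace ℝ E]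
    [FiniteDimensional ℝ E] {D : AffineSubspace ℝ E} (hD : Module.finrank ℝ D.direction = 1)
    {p₁ p₂ : E} (h1 : p₁ ∈ D) (h2 : p₂ ∈ D) (hne : p₂ - p₁ ≠ 0)
    {w : E} (hw : w ∈ D) : ∃ s : ℝ, w = p₁ + s • (p₂ - p₁) := by
  have hv : w - p₁ ∈ D.direction := by
    simpa [vsub_eq_sub] using AffineSubspace.vsub_mem_direction hw h1
  rw [aux_line_direction_eq_span hD h1 h2 hne, Submodule.mem_span_singleton] at hv
  obtain ⟨s, hs⟩ := hv
  exact ⟨s, by rw [hs]; abel⟩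

lemma aux_mem_of_param {E : Type*} [NormedAddCommGroup E] [InnerProductSpace ℝ E]
    {D : AffineSubspace ℝ E} {q₁ q₂ : E} (h1 : q₁ ∈ D) (h2 : q₂ ∈ D) (s : ℝ) :
    q₁ + s • (q₂ - q₁) ∈ D := by
  have hv : s • (q₂ - q₁) ∈ D.direction :=
    Submodule.smul_mem _ s (by simpa [vsub_eq_sub] using AffineSubspace.vsub_mem_direction h2 h1)
  simpa [vadd_eq_add, add_comm] using AffineSubspace.vadd_mem_of_mem_direction hv h1

lemma aux_seg_dist_bound {E : Type*} [NormedAddCommGroup E] [InnerProductSpace ℝ E]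
    {p₁ p₂ q₁ q₂ w : E} {a b s : ℝ} (hb : 0 < b) (hbn : b ≤ ‖p₂ - p₁‖)
    (h1 : ‖p₁ - q₁‖ ≤ a) (h2 : ‖p₂ - q₂‖ ≤ a)
    (hw : w = p₁ + s • (p₂ - p₁)) :
    ‖w - (q₁ + s • (q₂ - q₁))‖ ≤ a + 2 * a * ‖w - p₁‖ / b := by
  have ha : 0 ≤ a := le_trans (norm_nonneg _) h1
  have hwp : ‖w - p₁‖ = |s| * ‖p₂ - p₁‖ := by
    rw [hw]; simp [norm_smul, abs_eq_abs]
  have hs : |s| * b ≤ ‖w - p₁‖ := by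
    rw [hwp]; exact mul_le_mul_of_nonneg_left hbn (abs_nonneg s)
  have key : ‖w - (q₁ + s • (q₂ - q₁))‖ ≤ a + |s| * (2 * a) := by
    have e1 : w - (q₁ + s • (q₂ - q₁)) = (p₁ - q₁) + s • ((p₂ - q₂) - (p₁ - q₁)) := by
      rw [hw]; module
    rw [e1]
    calc ‖(p₁ - q₁) + s • ((p₂ - q₂) - (p₁ - q₁))‖
        ≤ ‖p₁ - q₁‖ + ‖s • ((p₂ - q₂) - (p₁ - q₁))‖ := norm_add_le _ _
      _ ≤ a + |s| * (2 * a) := by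
          rw [norm_smul, Real.norm_eq_abs]
          gcongr
          calc ‖(p₂ - q₂) - (p₁ - q₁)‖ ≤ ‖p₂ - q₂‖ + ‖p₁ - q₁‖ := norm_sub_le _ _
            _ ≤ 2 * a := by linarith
  have : |s| ≤ ‖w - p₁‖ / b := (le_div_iff₀ hb).2 hs
  calc ‖w - (q₁ + s • (q₂ - q₁))‖ ≤ a + |s| * (2 * a) := key
    _ ≤ a + (‖w - p₁‖ / b) * (2 * a) := by nlinarith
    _ = a + 2 * a * ‖w - p₁‖ / b := by ring

lemma aux_one_side {E : Type*} [NormedAddCommGroup E] [InnerProductSpace ℝ E]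
    [FiniteDimensional ℝ E] {D D' : AffineSubspace ℝ E}
    (hD : Module.finrank ℝ D.direction = 1)
    {p₁ p₂ q₁ q₂ : E} (hp₁ : p₁ ∈ D) (hp₂ : p₂ ∈ D) (hq₁ : q₁ ∈ D') (hq₂ : q₂ ∈ D')
    {a b : ℝ} (hb : 0 < b) (hbn : b ≤ ‖p₂ - p₁‖) (h1 : ‖p₁ - q₁‖ ≤ a) (h2 : ‖p₂ - q₂‖ ≤ a)
    {w : E} (hw : w ∈ D) :
    Metric.infDist w (D' : Set E) ≤ a + 2 * a * ‖w - p₁‖ / b := by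
  have hne : p₂ - p₁ ≠ 0 := by
    intro h; rw [h, norm_zero] at hbn; linarith
  obtain ⟨s, hs⟩ := aux_line_param hD hp₁ hp₂ hne hw
  calc Metric.infDist w (D' : Set E) ≤ dist w (q₁ + s • (q₂ - q₁)) :=
        infDist_le_dist_of_mem (aux_mem_of_param hq₁ hq₂ s)
    _ = ‖w - (q₁ + s • (q₂ - q₁))‖ := dist_eq_norm _ _
    _ ≤ a + 2 * a * ‖w - p₁‖ / b := aux_seg_dist_bound hb hbn h1 h2 hs

lemma aux_inner_div_bound {E : Type*} [NormedAddCommGroup E] [InnerProductSpace ℝ E]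
    {v₁ v₂ : E} {b e : ℝ} (hb : 0 < b) (h1 : b ≤ ‖v₁‖) (h2 : b ≤ ‖v₂‖)
    (he : ‖v₁ - v₂‖ ≤ e) :
    1 - e ^ 2 / (2 * b ^ 2) ≤ (inner ℝ v₁ v₂ : ℝ) / (‖v₁‖ * ‖v₂‖) := by
  have hn : ‖v₁ - v₂‖ ^ 2 = ‖v₁‖ ^ 2 - 2 * (inner ℝ v₁ v₂ : ℝ) + ‖v₂‖ ^ 2 := by
    rw [@norm_sub_sq_real]
  have he0 : 0 ≤ e := le_trans (norm_nonneg _) he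
  have hpos : 0 < ‖v₁‖ * ‖v₂‖ := mul_pos (hb.trans_le h1) (hb.trans_le h2)
  rw [le_div_iff₀ hpos]
  have h3 : ‖v₁ - v₂‖ ^ 2 ≤ e ^ 2 := by nlinarith [norm_nonneg (v₁ - v₂)]
  have key : (inner ℝ v₁ v₂ : ℝ) ≥ ‖v₁‖ * ‖v₂‖ - e ^ 2 / 2 := by nlinarith [sq_nonneg (‖v₁‖ - ‖v₂‖)]
  have hq : b ^ 2 ≤ ‖v₁‖ * ‖v₂‖ := by nlinarith
  have hcb : e ^ 2 / (2 * b ^ 2) * b ^ 2 = e ^ 2 / 2 := by field_simp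
  have hmono : e ^ 2 / (2 * b ^ 2) * b ^ 2 ≤ e ^ 2 / (2 * b ^ 2) * (‖v₁‖ * ‖v₂‖) := by
    apply mul_le_mul_of_nonneg_left hq (by positivity)
  nlinarith

lemma aux_arccos_le_of_ge {x z : ℝ} (hx : 0 ≤ x) (hz : 0 < z) (h : 1 - z ^ 2 / 8 ≤ x) :
    Real.arccos x ≤ z := by
  rcases le_or_gt (Real.pi / 2) z with hz2 | hz2
  · exact le_trans (Real.arccos_le_pi_div_two.2 hx) hz2
  · have hcos : Real.cos z ≤ 1 - z ^ 2 / 8 := by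
      have hsin : 2 / Real.pi * (z / 2) ≤ Real.sin (z / 2) :=
        Real.mul_le_sin (by linarith) (by linarith)
      have hc2 : Real.cos z = 1 - 2 * Real.sin (z / 2) ^ 2 := by
        have h := Real.cos_two_mul (z / 2)
        have h2 := Real.sin_sq_add_cos_sq (z / 2)
        rw [show 2 * (z / 2) = z by ring] at h
        nlinarith
      have hpi : Real.pi ≤ 4 := by nlinarith [Real.pi_lt_d2]
      have hπ0 : 0 < Real.pi := Real.pi_pos
      have hzp : z / Real.pi ≤ Real.sin (z / 2) := by
        calc z / Real.pi = 2 / Real.pi * (z / 2) := by field_simp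
          _ ≤ _ := hsin
      have h4 : z / 4 ≤ Real.sin (z / 2) := le_trans (by
        rw [div_le_div_iff₀ (by norm_num) hπ0]; nlinarith) hzp
      nlinarith [Real.sin_nonneg_of_nonneg_of_le_pi (x := z / 2) (by linarith) (by linarith)]
    have hle : Real.cos z ≤ x := le_trans hcos h
    calc Real.arccos x ≤ Real.arccos (Real.cos z) := by
          unfold Real.arccos
          have := Real.monotone_arcsin hle
          linarith
      _ = z := Real.arccos_cos (by linarith) (by linarith)

lemma aux_bad_meas {n : ℕ} (μ : Measure (EuclideanSpace ℝ (Fin n))) [IsFiniteMeasure μ]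
    (D : Set (EuclideanSpace ℝ (Fin n))) (c : EuclideanSpace ℝ (Fin n))
    (R t θ I : ℝ) (ht : 0 < t) (hθ : 0 < θ)
    (hI : ∫ z in closedBall c R, infDist z D / t ∂μ ≤ I) :
    (μ ({z | θ ≤ infDist z D / t} ∩ closedBall c R)).toReal ≤ I / θ := by
  set f : EuclideanSpace ℝ (Fin n) → ℝ := fun z => infDist z D / t with hf
  have hcont : Continuous f := (continuous_infDist_pt D).div_const t
  have hnn : ∀ z, 0 ≤ f z := fun z => div_nonneg infDist_nonneg ht.le
  have hint : Integrable f (μ.restrict (closedBall c R)) := by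
    apply Integrable.mono' (integrable_const ((infDist c D + |R|) / t))
      hcont.aestronglyMeasurable
    filter_upwards [ae_restrict_mem measurableSet_closedBall] with z hz
    rw [Real.norm_eq_abs, abs_of_nonneg (hnn z)]
    have h1 : infDist z D ≤ infDist c D + |R| := by
      calc infDist z D ≤ infDist c D + dist z c := infDist_le_infDist_add_dist
        _ ≤ infDist c D + |R| := by
            have h0 := hz
            rw [mem_closedBall] at h0
            have : dist z c ≤ |R| := le_trans h0 (le_abs_self R)
            linarith
    show infDist z D / t ≤ (infDist c D + |R|) / t
    gcongr
  have cheb := mul_meas_ge_le_integral_of_nonneg (ae_of_all _ hnn) hint θ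
  rw [measureReal_def, Measure.restrict_apply' measurableSet_closedBall] at cheb
  rw [le_div_iff₀ hθ]
  calc (μ ({z | θ ≤ f z} ∩ closedBall c R)).toReal * θ
      = θ * (μ ({z | θ ≤ f z} ∩ closedBall c R)).toReal := by ring
    _ ≤ ∫ z in closedBall c R, f z ∂μ := cheb
    _ ≤ I := hI

lemma aux_numeric1 (C₀ δ ε t d m η τ : ℝ) (hC₀ : 1 ≤ C₀) (hδ : 0 < δ) (hε : 0 < ε) (ht : 0 < t)
    (hd : 0 ≤ d) (hm0 : 0 ≤ m) (hm : m ≤ d + t + η)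
    (hη : η = 80000 * ε * t / δ) (hτ : τ = δ * t / (8 * C₀)) (h4 : 4 * η ≤ τ) :
    2 * η + 2 * (2 * η) * m / (τ / 2) ≤ (10 ^ 8 * C₀ * (1 / δ + 1 / δ ^ 2) + 2) * ε * (t + d) := by
  have hτ0 : 0 < τ := by rw [hτ]; positivity
  have hη0 : 0 < η := by rw [hη]; positivity
  have hval : 2 * (2 * η) * m / (τ / 2) = (8 * η / τ) * m := by
    field_simp; ring
  have hr : 8 * η / τ = 5120000 * C₀ * ε / δ ^ 2 := by
    rw [hη, hτ]; field_simp; ring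
  have hsmall : (8 * η / τ) * η ≤ 2 * η := by
    have : 8 * η / τ ≤ 2 := by
      rw [div_le_iff₀ hτ0]; linarith
    nlinarith
  have hbound : 2 * η + 2 * (2 * η) * m / (τ / 2)
      ≤ 4 * η + (5120000 * C₀ * ε / δ ^ 2) * (d + t) := by
    rw [hval]
    have h1 : (8 * η / τ) * m ≤ (8 * η / τ) * (d + t + η) := by
      apply mul_le_mul_of_nonneg_left hm (by positivity)
    have h2 : (8 * η / τ) * (d + t + η) = (8 * η / τ) * (d + t) + (8 * η / τ) * η := by ring
    rw [hr] at h2 ⊢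
    nlinarith [hsmall, hr]
  refine hbound.trans ?_
  have e1 : 4 * η ≤ 10 ^ 8 * C₀ * (1 / δ) * ε * t := by
    rw [hη, show (4:ℝ) * (80000 * ε * t / δ) = (320000 * ε * t) / δ by ring,
      show 10 ^ 8 * C₀ * (1 / δ) * ε * t = (10 ^ 8 * C₀ * ε * t) / δ by ring]
    gcongr
    nlinarith
  have e2 : (5120000 * C₀ * ε / δ ^ 2) * (d + t) ≤ 10 ^ 8 * C₀ * (1 / δ ^ 2) * ε * (t + d) := by
    rw [show (5120000 * C₀ * ε / δ ^ 2) * (d + t) = (5120000 * C₀ * ε * (d + t)) / δ ^ 2 by ring,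
      show 10 ^ 8 * C₀ * (1 / δ ^ 2) * ε * (t + d) = (10 ^ 8 * C₀ * ε * (d + t)) / δ ^ 2 by ring]
    gcongr
    nlinarith
  have e3 : (0:ℝ) ≤ 10 ^ 8 * C₀ * (1 / δ) * ε * d := by positivity
  have e4 : (0:ℝ) ≤ 2 * ε * (t + d) := by positivity
  have expand : (10 ^ 8 * C₀ * (1 / δ + 1 / δ ^ 2) + 2) * ε * (t + d)
      = 10 ^ 8 * C₀ * (1 / δ) * ε * t + 10 ^ 8 * C₀ * (1 / δ) * ε * d
        + 10 ^ 8 * C₀ * (1 / δ ^ 2) * ε * (t + d) + 2 * ε * (t + d) := by ring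
  linarith

set_option maxHeartbeats 2000000 in
lemma aux_numeric2 (C₀ δ ε t η τ : ℝ) (hC₀ : 1 ≤ C₀) (hδ : 0 < δ) (hε : 0 < ε) (ht : 0 < t)
    (hη : η = 80000 * ε * t / δ) (hτ : τ = δ * t / (8 * C₀)) :
    16 * η / τ ≤ (10 ^ 8 * C₀ * (1 / δ + 1 / δ ^ 2) + 2) * ε := by
  rw [hη, hτ]
  rw [div_le_iff₀ (by positivity : (0:ℝ) < δ * t / (8 * C₀))]
  field_simp
  have hCδ : 0 ≤ C₀ * δ := mul_nonneg (le_trans zero_le_one hC₀) hδ.le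
  nlinarith [mul_nonneg (mul_nonneg (mul_nonneg (le_trans zero_le_one hC₀) hε.le) ht.le)
      (pow_nonneg hδ.le 3),
    mul_nonneg (mul_nonneg (mul_nonneg (le_trans zero_le_one hC₀) hε.le) ht.le)
      (pow_nonneg hδ.le 4),
    mul_nonneg (mul_nonneg hε.le ht.le) (pow_nonneg hδ.le 5)]

set_option maxHeartbeats 2000000 in
/-- Lemma 2.6: two lines nearly realizing small `β₁`-type bounds at nearby points of
controlled density are close to each other, both in distance (at scale `t + dist(w,x)`)
and in angle. -/
theorem statement8 (n : ℕ) (hn : 1 ≤ n) (C₀ k δ : ℝ)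
    (hC₀ : 1 ≤ C₀) (hk : 2 ≤ k) (hδ : 0 < δ) :
    ∃ ε₀ C : ℝ, 0 < ε₀ ∧ 1 < C ∧
      ∀ μ : Measure (EuclideanSpace ℝ (Fin n)),
        (∃ K : Set (EuclideanSpace ℝ (Fin n)), IsCompact K ∧ μ Kᶜ = 0) →
        (∀ (x : EuclideanSpace ℝ (Fin n)) (r : ℝ),
          μ (Metric.closedBall x r) ≤
            ENNReal.ofReal (C₀ * Metric.diam (Metric.closedBall x r))) →
        ∀ (x y : EuclideanSpace ℝ (Fin n)) (t ε : ℝ),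
          x ∈ measSupport μ → 0 < t → 0 < ε → ε < ε₀ →
          ENNReal.ofReal (δ * t) ≤ μ (Metric.closedBall x t) →
          ENNReal.ofReal (δ * t) ≤ μ (Metric.closedBall y t) →
          dist x y ≤ (k / 2) * t →
          ∀ D₁ D₂ : AffineSubspace ℝ (EuclideanSpace ℝ (Fin n)),
            IsLine D₁ → IsLine D₂ →
            (1 / t) * (∫ z in Metric.closedBall x (k * t),
                Metric.infDist z (D₁ : Set (EuclideanSpace ℝ (Fin n))) / t ∂μ) ≤ 10 ^ 4 * ε →
            (1 / t) * (∫ z in Metric.closedBall y (k * t),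
                Metric.infDist z (D₂ : Set (EuclideanSpace ℝ (Fin n))) / t ∂μ) ≤ 10 ^ 4 * ε →
            (∀ w ∈ (D₁ : Set (EuclideanSpace ℝ (Fin n))),
              Metric.infDist w (D₂ : Set (EuclideanSpace ℝ (Fin n))) ≤ C * ε * (t + dist w x)) ∧
            (∀ w ∈ (D₂ : Set (EuclideanSpace ℝ (Fin n))),
              Metric.infDist w (D₁ : Set (EuclideanSpace ℝ (Fin n))) ≤ C * ε * (t + dist w x)) ∧
            (∀ u v : EuclideanSpace ℝ (Fin n),
              u ∈ D₁.direction → v ∈ D₂.direction → ‖u‖ = 1 → ‖v‖ = 1 →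
              Real.arccos |(inner ℝ u v : ℝ)| ≤ C * ε) := by
  refine ⟨δ ^ 2 / (10 ^ 7 * C₀), 10 ^ 8 * C₀ * (1 / δ + 1 / δ ^ 2) + 2, by positivity, ?_, ?_⟩
  · have : (0:ℝ) < 10 ^ 8 * C₀ * (1 / δ + 1 / δ ^ 2) := by positivity
    linarith only [this]
  intro μ hcomp hgrowth x y t ε hxsupp ht hε hεε₀ hdx hdy hxy D₁ D₂ hD₁ hD₂ hβ₁ hβ₂
  -- μ is a finite measure
  obtain ⟨K, hK, hKc⟩ := hcomp
  haveI : IsFiniteMeasure μ := by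
    obtain ⟨R, hR⟩ := hK.isBounded.subset_closedBall 0
    constructor
    have h1 : μ univ ≤ μ K + μ Kᶜ := by
      rw [← union_compl_self K]; exact measure_union_le _ _
    rw [hKc, add_zero] at h1
    exact h1.trans_lt (((measure_mono hR).trans (hgrowth 0 R)).trans_lt ENNReal.ofReal_lt_top)
  -- notation
  set θ : ℝ := 80000 * ε / δ with hθdef
  set η : ℝ := 80000 * ε * t / δ with hηdef
  set τ : ℝ := δ * t / (8 * C₀) with hτdef
  have hθ0 : 0 < θ := by rw [hθdef]; positivity
  have hη0 : 0 < η := by rw [hηdef]; positivity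
  have hτ0 : 0 < τ := by rw [hτdef]; positivity
  have hθt : θ * t = η := by rw [hθdef, hηdef]; ring
  -- 4η ≤ τ from ε < ε₀
  have hε' : ε * (10 ^ 7 * C₀) < δ ^ 2 := (lt_div_iff₀ (by positivity)).1 hεε₀
  have h4ητ : 4 * η ≤ τ := by
    rw [hηdef, hτdef,
      show (4:ℝ) * (80000 * ε * t / δ) = (320000 * ε * t) / δ by ring,
      div_le_div_iff₀ hδ (by positivity)]
    nlinarith only [mul_nonneg (sub_nonneg.2 hε'.le) ht.le,
      mul_nonneg (mul_nonneg hε.le ht.le) (le_trans zero_le_one hC₀ : (0:ℝ) ≤ C₀), hε.le, ht.le]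
  -- integral bounds
  have hI₁ : ∫ z in closedBall x (k * t),
      infDist z (D₁ : Set (EuclideanSpace ℝ (Fin n))) / t ∂μ ≤ 10 ^ 4 * ε * t := by
    set S := ∫ z in closedBall x (k * t),
      infDist z (D₁ : Set (EuclideanSpace ℝ (Fin n))) / t ∂μ
    have h0 : S = t * (1 / t * S) := by field_simp
    calc S = t * (1 / t * S) := h0
      _ ≤ t * (10 ^ 4 * ε) := mul_le_mul_of_nonneg_left hβ₁ ht.le
      _ = 10 ^ 4 * ε * t := by ring
  have hI₂ : ∫ z in closedBall y (k * t),
      infDist z (D₂ : Set (EuclideanSpace ℝ (Fin n))) / t ∂μ ≤ 10 ^ 4 * ε * t := by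
    set S := ∫ z in closedBall y (k * t),
      infDist z (D₂ : Set (EuclideanSpace ℝ (Fin n))) / t ∂μ
    have h0 : S = t * (1 / t * S) := by field_simp
    calc S = t * (1 / t * S) := h0
      _ ≤ t * (10 ^ 4 * ε) := mul_le_mul_of_nonneg_left hβ₂ ht.le
      _ = 10 ^ 4 * ε * t := by ring
  have hIθ : (10 ^ 4 * ε * t) / θ = δ * t / 8 := by
    rw [hθdef]; field_simp; ring
  have hbad₁ : (μ ({z | θ ≤ infDist z (D₁ : Set (EuclideanSpace ℝ (Fin n))) / t}
      ∩ closedBall x (k * t))).toReal ≤ δ * t / 8 := by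
    have := aux_bad_meas μ _ x (k * t) t θ (10 ^ 4 * ε * t) ht hθ0 hI₁
    rwa [hIθ] at this
  have hbad₂ : (μ ({z | θ ≤ infDist z (D₂ : Set (EuclideanSpace ℝ (Fin n))) / t}
      ∩ closedBall y (k * t))).toReal ≤ δ * t / 8 := by
    have := aux_bad_meas μ _ y (k * t) t θ (10 ^ 4 * ε * t) ht hθ0 hI₂
    rwa [hIθ] at this
  set B : Set (EuclideanSpace ℝ (Fin n)) := closedBall x t with hBdef
  set bad₁ : Set (EuclideanSpace ℝ (Fin n)) :=
    {z | θ ≤ infDist z (D₁ : Set (EuclideanSpace ℝ (Fin n))) / t} with hbad₁def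
  set bad₂ : Set (EuclideanSpace ℝ (Fin n)) :=
    {z | θ ≤ infDist z (D₂ : Set (EuclideanSpace ℝ (Fin n))) / t} with hbad₂def
  have hsub₁ : B ⊆ closedBall x (k * t) := closedBall_subset_closedBall (by nlinarith only [ht.le, hk])
  have hsub₂ : B ⊆ closedBall y (k * t) := by
    intro z hz
    rw [mem_closedBall] at *
    calc dist z y ≤ dist z x + dist x y := dist_triangle _ _ _
      _ ≤ t + (k / 2) * t := add_le_add hz hxy
      _ ≤ k * t := by nlinarith only [ht.le, hk]
  have hb₁ : (μ (B ∩ bad₁)).toReal ≤ δ * t / 8 := by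
    refine le_trans (ENNReal.toReal_mono (measure_ne_top _ _) (measure_mono ?_)) hbad₁
    intro z hz
    exact ⟨hz.2, hsub₁ hz.1⟩
  have hb₂ : (μ (B ∩ bad₂)).toReal ≤ δ * t / 8 := by
    refine le_trans (ENNReal.toReal_mono (measure_ne_top _ _) (measure_mono ?_)) hbad₂
    intro z hz
    exact ⟨hz.2, hsub₂ hz.1⟩
  have hμB : δ * t ≤ (μ B).toReal := by
    have h2 := ENNReal.toReal_mono (measure_ne_top μ B) hdx
    rwa [ENNReal.toReal_ofReal (by positivity)] at h2
  have hballτ : ∀ z : EuclideanSpace ℝ (Fin n),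
      (μ (closedBall z τ)).toReal ≤ δ * t / 4 := by
    intro z
    have h2 := ENNReal.toReal_mono ENNReal.ofReal_ne_top (hgrowth z τ)
    rw [ENNReal.toReal_ofReal (mul_nonneg (by linarith) diam_nonneg)] at h2
    have h3 : diam (closedBall z τ) ≤ 2 * τ := diam_closedBall hτ0.le
    have h4 : C₀ * diam (closedBall z τ) ≤ C₀ * (2 * τ) := by
      apply mul_le_mul_of_nonneg_left h3 (by linarith)
    have h5 : C₀ * (2 * τ) = δ * t / 4 := by
      rw [hτdef]; field_simp; ring
    linarith only [h2, h4, h5]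
  have hδt : 0 < δ * t := by positivity
  -- find z₁
  have hG : (B \ (bad₁ ∪ bad₂)).Nonempty := by
    rw [nonempty_iff_ne_empty]
    intro hemp
    have hsub : B ⊆ (B ∩ bad₁) ∪ (B ∩ bad₂) := by
      intro z hz
      by_cases h1 : z ∈ bad₁
      · exact Or.inl ⟨hz, h1⟩
      by_cases h2 : z ∈ bad₂
      · exact Or.inr ⟨hz, h2⟩
      exact absurd (show z ∈ B \ (bad₁ ∪ bad₂) from ⟨hz, fun h => h.elim h1 h2⟩)
        (by rw [hemp]; exact notMem_empty z)
    have hμ : μ B ≤ μ (B ∩ bad₁) + μ (B ∩ bad₂) :=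
      (measure_mono hsub).trans (measure_union_le _ _)
    have h2 := ENNReal.toReal_mono
      (ENNReal.add_ne_top.2 ⟨measure_ne_top _ _, measure_ne_top _ _⟩) hμ
    rw [ENNReal.toReal_add (measure_ne_top _ _) (measure_ne_top _ _)] at h2
    linarith only [h2, hb₁, hb₂, hμB, hδt]
  obtain ⟨z₁, hz₁⟩ := hG
  -- find z₂
  have hG' : ((B \ (bad₁ ∪ bad₂)) \ closedBall z₁ τ).Nonempty := by
    rw [nonempty_iff_ne_empty]
    intro hemp
    have hsub : B ⊆ (B ∩ bad₁) ∪ ((B ∩ bad₂) ∪ closedBall z₁ τ) := by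
      intro z hz
      by_cases h1 : z ∈ bad₁
      · exact Or.inl ⟨hz, h1⟩
      by_cases h2 : z ∈ bad₂
      · exact Or.inr (Or.inl ⟨hz, h2⟩)
      by_cases h3 : z ∈ closedBall z₁ τ
      · exact Or.inr (Or.inr h3)
      exact absurd (show z ∈ (B \ (bad₁ ∪ bad₂)) \ closedBall z₁ τ from
        ⟨⟨hz, fun h => h.elim h1 h2⟩, h3⟩) (by rw [hemp]; exact notMem_empty z)
    have hμ : μ B ≤ μ (B ∩ bad₁) + (μ (B ∩ bad₂) + μ (closedBall z₁ τ)) :=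
      (measure_mono hsub).trans ((measure_union_le _ _).trans
        (add_le_add le_rfl (measure_union_le _ _)))
    have hne1 : μ (B ∩ bad₂) + μ (closedBall z₁ τ) ≠ ⊤ :=
      ENNReal.add_ne_top.2 ⟨measure_ne_top _ _, measure_ne_top _ _⟩
    have h2 := ENNReal.toReal_mono (ENNReal.add_ne_top.2 ⟨measure_ne_top _ _, hne1⟩) hμ
    rw [ENNReal.toReal_add (measure_ne_top _ _) hne1,
      ENNReal.toReal_add (measure_ne_top _ _) (measure_ne_top _ _)] at h2
    linarith only [h2, hb₁, hb₂, hμB, hδt, hballτ z₁]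
  obtain ⟨z₂, hz₂⟩ := hG'
  -- good-point properties
  have hgood : ∀ z ∈ B \ (bad₁ ∪ bad₂),
      infDist z (D₁ : Set (EuclideanSpace ℝ (Fin n))) < η ∧
      infDist z (D₂ : Set (EuclideanSpace ℝ (Fin n))) < η := by
    intro z hz
    constructor
    · have h1 : ¬ θ ≤ infDist z (D₁ : Set (EuclideanSpace ℝ (Fin n))) / t :=
        fun h => hz.2 (Or.inl h)
      push_neg at h1
      rw [div_lt_iff₀ ht] at h1
      linarith only [h1, hθt]
    · have h1 : ¬ θ ≤ infDist z (D₂ : Set (EuclideanSpace ℝ (Fin n))) / t :=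
        fun h => hz.2 (Or.inr h)
      push_neg at h1
      rw [div_lt_iff₀ ht] at h1
      linarith only [h1, hθt]
  have hg₁ := hgood z₁ hz₁
  have hg₂ := hgood z₂ hz₂.1
  have hz₁B : dist z₁ x ≤ t := mem_closedBall.1 hz₁.1
  have hd12 : τ < dist z₂ z₁ := by
    have := hz₂.2
    rw [mem_closedBall] at this
    linarith only [not_le.1 this]
  -- pick nearby points on the lines
  obtain ⟨p₁, hp₁, hp₁d⟩ := (infDist_lt_iff hD₁.1).1 hg₁.1
  obtain ⟨p₂, hp₂, hp₂d⟩ := (infDist_lt_iff hD₁.1).1 hg₂.1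
  obtain ⟨q₁, hq₁, hq₁d⟩ := (infDist_lt_iff hD₂.1).1 hg₁.2
  obtain ⟨q₂, hq₂, hq₂d⟩ := (infDist_lt_iff hD₂.1).1 hg₂.2
  -- separation of the chosen points
  have hvp : τ / 2 ≤ ‖p₂ - p₁‖ := by
    have htr : dist z₂ z₁ ≤ dist z₂ p₂ + dist p₂ p₁ + dist p₁ z₁ := dist_triangle4 _ _ _ _
    rw [← dist_eq_norm]
    have h1 : dist p₁ z₁ < η := by rw [dist_comm]; exact hp₁d
    linarith only [htr, hd12, hp₂d, h1, h4ητ, hη0]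
  have hvq : τ / 2 ≤ ‖q₂ - q₁‖ := by
    have htr : dist z₂ z₁ ≤ dist z₂ q₂ + dist q₂ q₁ + dist q₁ z₁ := dist_triangle4 _ _ _ _
    rw [← dist_eq_norm]
    have h1 : dist q₁ z₁ < η := by rw [dist_comm]; exact hq₁d
    linarith only [htr, hd12, hq₂d, h1, h4ητ, hη0]
  have hpq₁ : ‖p₁ - q₁‖ ≤ 2 * η := by
    rw [← dist_eq_norm]
    calc dist p₁ q₁ ≤ dist p₁ z₁ + dist z₁ q₁ := dist_triangle _ _ _
      _ ≤ 2 * η := by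
          have h1 : dist p₁ z₁ < η := by rw [dist_comm]; exact hp₁d
          linarith only [h1, hq₁d]
  have hpq₂ : ‖p₂ - q₂‖ ≤ 2 * η := by
    rw [← dist_eq_norm]
    calc dist p₂ q₂ ≤ dist p₂ z₂ + dist z₂ q₂ := dist_triangle _ _ _
      _ ≤ 2 * η := by
          have h1 : dist p₂ z₂ < η := by rw [dist_comm]; exact hp₂d
          linarith only [h1, hq₂d]
  have hτ20 : 0 < τ / 2 := by linarith only [hτ0]
  refine ⟨?_, ?_, ?_⟩
  -- part (i), w ∈ D₁
  · intro w hw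
    have hos := aux_one_side hD₁.2 hp₁ hp₂ hq₁ hq₂ hτ20 hvp hpq₁ hpq₂ hw
    refine hos.trans ?_
    apply aux_numeric1 C₀ δ ε t (dist w x) ‖w - p₁‖ η τ hC₀ hδ hε ht dist_nonneg
      (norm_nonneg _) ?_ hηdef hτdef h4ητ
    rw [← dist_eq_norm]
    calc dist w p₁ ≤ dist w x + dist x z₁ + dist z₁ p₁ := dist_triangle4 _ _ _ _
      _ ≤ dist w x + t + η := by
          have h1 : dist x z₁ ≤ t := by rw [dist_comm]; exact hz₁B
          linarith only [h1, hp₁d]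
  -- part (i), w ∈ D₂
  · intro w hw
    have hpq₁' : ‖q₁ - p₁‖ ≤ 2 * η := by rw [norm_sub_rev]; exact hpq₁
    have hpq₂' : ‖q₂ - p₂‖ ≤ 2 * η := by rw [norm_sub_rev]; exact hpq₂
    have hos := aux_one_side hD₂.2 hq₁ hq₂ hp₁ hp₂ hτ20 hvq hpq₁' hpq₂' hw
    refine hos.trans ?_
    apply aux_numeric1 C₀ δ ε t (dist w x) ‖w - q₁‖ η τ hC₀ hδ hε ht dist_nonneg
      (norm_nonneg _) ?_ hηdef hτdef h4ητ
    rw [← dist_eq_norm]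
    calc dist w q₁ ≤ dist w x + dist x z₁ + dist z₁ q₁ := dist_triangle4 _ _ _ _
      _ ≤ dist w x + t + η := by
          have h1 : dist x z₁ ≤ t := by rw [dist_comm]; exact hz₁B
          linarith only [h1, hq₁d]
  -- part (ii), angle
  · intro u v hu hv hnu hnv
    set Cε : ℝ := (10 ^ 8 * C₀ * (1 / δ + 1 / δ ^ 2) + 2) * ε with hCεdef
    have hCε0 : 0 < Cε := by rw [hCεdef]; positivity
    have hne₁ : p₂ - p₁ ≠ 0 := by
      intro h
      have h0 : τ / 2 ≤ ‖p₂ - p₁‖ := hvp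
      rw [h, norm_zero] at h0
      linarith only [h0, hτ0]
    have hne₂ : q₂ - q₁ ≠ 0 := by
      intro h
      have h0 : τ / 2 ≤ ‖q₂ - q₁‖ := hvq
      rw [h, norm_zero] at h0
      linarith only [h0, hτ0]
    have hv12 : ‖(p₂ - p₁) - (q₂ - q₁)‖ ≤ 4 * η := by
      have he : (p₂ - p₁) - (q₂ - q₁) = (p₂ - q₂) - (p₁ - q₁) := by abel
      rw [he]
      calc ‖(p₂ - q₂) - (p₁ - q₁)‖ ≤ ‖p₂ - q₂‖ + ‖p₁ - q₁‖ := norm_sub_le _ _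
        _ ≤ 4 * η := by linarith only [hpq₁, hpq₂]
    have hinner := aux_inner_div_bound hτ20 hvp hvq hv12
    -- express u, v through p₂ - p₁ and q₂ - q₁
    have hdir₁ : D₁.direction = Submodule.span ℝ {p₂ - p₁} :=
      aux_line_direction_eq_span hD₁.2 hp₁ hp₂ hne₁
    have hdir₂ : D₂.direction = Submodule.span ℝ {q₂ - q₁} :=
      aux_line_direction_eq_span hD₂.2 hq₁ hq₂ hne₂
    rw [hdir₁, Submodule.mem_span_singleton] at hu
    rw [hdir₂, Submodule.mem_span_singleton] at hv
    obtain ⟨c, hc⟩ := hu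
    obtain ⟨c', hc'⟩ := hv
    have hnv₁ : 0 < ‖p₂ - p₁‖ := norm_pos_iff.2 hne₁
    have hnv₂ : 0 < ‖q₂ - q₁‖ := norm_pos_iff.2 hne₂
    have hcval : |c| * ‖p₂ - p₁‖ = 1 := by
      rw [← Real.norm_eq_abs, ← norm_smul, hc, hnu]
    have hcval' : |c'| * ‖q₂ - q₁‖ = 1 := by
      rw [← Real.norm_eq_abs, ← norm_smul, hc', hnv]
    have hinnuv : |(inner ℝ u v : ℝ)|
        = |(inner ℝ (p₂ - p₁) (q₂ - q₁) : ℝ)| / (‖p₂ - p₁‖ * ‖q₂ - q₁‖) := by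
      rw [← hc, ← hc', real_inner_smul_left, real_inner_smul_right, abs_mul, abs_mul]
      have h1 : |c| = 1 / ‖p₂ - p₁‖ := by
        rw [eq_div_iff (ne_of_gt hnv₁)]; exact hcval
      have h2 : |c'| = 1 / ‖q₂ - q₁‖ := by
        rw [eq_div_iff (ne_of_gt hnv₂)]; exact hcval'
      rw [h1, h2]; field_simp; try ring
    have habs : (inner ℝ (p₂ - p₁) (q₂ - q₁) : ℝ) / (‖p₂ - p₁‖ * ‖q₂ - q₁‖)
        ≤ |(inner ℝ u v : ℝ)| := by
      rw [hinnuv]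
      gcongr
      exact le_abs_self _
    -- numeric comparison
    have h16 : 16 * η / τ ≤ Cε := by
      rw [hCεdef]
      exact aux_numeric2 C₀ δ ε t η τ hC₀ hδ hε ht hηdef hτdef
    have h160 : 0 ≤ 16 * η / τ := by positivity
    have hsq : (16 * η / τ) ^ 2 ≤ Cε ^ 2 := pow_le_pow_left₀ h160 h16 2
    have hid : (4 * η) ^ 2 / (2 * (τ / 2) ^ 2) = (16 * η / τ) ^ 2 / 8 := by
      field_simp; ring
    have hge : 1 - Cε ^ 2 / 8 ≤ |(inner ℝ u v : ℝ)| := by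
      have := hinner.trans habs
      rw [hid] at this
      linarith only [this, hsq]
    exact aux_arccos_le_of_ge (abs_nonneg _) hCε0 hge
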